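/- arXiv:1809.03108 — 4 statements merged into one kernel-verified Lean document; each statement's English description precedes it below -/
import Mathlib

section
/- The ω-language L = (a+b)*(a^ω ∪ b^ω) over alphabet {a,b} (ω-words that are eventually constantly a or eventually constantly b) has a trivial right congruence: for all finite words x, y and ω-words w, xw ∈ L iff yw ∈ L. Moreover L is not of the form Σ*R^ω for any single language R of finite words. -/
namespace OmegaRC

variable {σ : Type*} {Q : Type*}

/-- Concatenation of a finite word with an ω-word. -/
def wcat (x : List σ) (w : ℕ → σ) : ℕ → σ :=
  fun n => if h : n < x.length then x.get ⟨n, h⟩ else w (n - x.length)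

/-- Canonical right congruence of an ω-language: `x ∼_L y`. -/
def RC (L : Set (ℕ → σ)) (x y : List σ) : Prop :=
  ∀ w : ℕ → σ, wcat x w ∈ L ↔ wcat y w ∈ L

/-- The periodic ω-word `v^ω` (for nonempty `v`). -/
def wrep [Inhabited σ] (v : List σ) : ℕ → σ :=
  fun n => v.getD (n % v.length) default

/-- Finite power `v^n` of a finite word. -/
def wpow (v : List σ) (n : ℕ) : List σ := (List.replicate n v).flatten

/-- The finite segment `w[i..j)` of an ω-word. -/
def segment (w : ℕ → σ) (i j : ℕ) : List σ :=
  (List.range (j - i)).map (fun k => w (i + k))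

/-- `R^ω`: ω-words that are infinite concatenations of (nonempty) words of `R`. -/
def omegaPow (R : Set (List σ)) : Set (ℕ → σ) :=
  { w | ∃ f : ℕ → ℕ, f 0 = 0 ∧ StrictMono f ∧ ∀ i, segment w (f i) (f (i + 1)) ∈ R }

/-- A complete deterministic transition structure. -/
structure DetAut (σ : Type*) (Q : Type*) where
  init : Q
  step : Q → σ → Q

/-- Extended transition function on finite words. -/
def DetAut.runFin (A : DetAut σ Q) (q : Q) (x : List σ) : Q := x.foldl A.step q

/-- The run of a deterministic automaton on an ω-word. -/
def DetAut.run (A : DetAut σ Q) (w : ℕ → σ) : ℕ → Q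
  | 0 => A.init
  | n + 1 => A.step (A.run w n) (w n)

/-- The set of states occurring infinitely often in a run. -/
def infSet (r : ℕ → Q) : Set Q := { q | ∀ n, ∃ m, n ≤ m ∧ r m = q }

/-- Muller acceptance. -/
def MullerAcc (A : DetAut σ Q) (acc : Set (Set Q)) (w : ℕ → σ) : Prop :=
  infSet (A.run w) ∈ acc

/-- Büchi acceptance. -/
def BuchiAcc (A : DetAut σ Q) (F : Set Q) (w : ℕ → σ) : Prop :=
  ∀ n, ∃ m, n ≤ m ∧ A.run w m ∈ F

/-- co-Büchi acceptance. -/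
def CoBuchiAcc (A : DetAut σ Q) (F : Set Q) (w : ℕ → σ) : Prop :=
  ∃ n, ∀ m, n ≤ m → A.run w m ∉ F

/-- Colors occurring infinitely often in a run. -/
def infColors (κ : Q → ℕ) (r : ℕ → Q) : Set ℕ := { c | ∀ n, ∃ m, n ≤ m ∧ κ (r m) = c }

/-- Parity (min-odd) acceptance. -/
def ParityAcc (A : DetAut σ Q) (κ : Q → ℕ) (w : ℕ → σ) : Prop :=
  ∃ c ∈ infColors κ (A.run w), (∀ c' ∈ infColors κ (A.run w), c ≤ c') ∧ Odd c

/-- `S` is strongly connected. -/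
def IsSCC (A : DetAut σ Q) (S : Set Q) : Prop :=
  ∀ s1 ∈ S, ∀ s2 ∈ S, ∃ x : List σ, x ≠ [] ∧ A.runFin s1 x = s2

/-- Transitions taken infinitely often in the run on `w`. -/
def infTrans (A : DetAut σ Q) (w : ℕ → σ) : Set (Q × σ × Q) :=
  { t | ∀ n, ∃ m, n ≤ m ∧ (A.run w m, w m, A.run w (m + 1)) = t }

/-- Transition-table (transition-based Muller) acceptance. -/
def TransAcc (A : DetAut σ Q) (acc : Set (Set (Q × σ × Q))) (w : ℕ → σ) : Prop :=
  infTrans A w ∈ acc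

/-- Non-counting ω-language. -/
def NonCounting (L : Set (ℕ → σ)) : Prop :=
  ∃ n₀ : ℕ, ∀ n > n₀, ∀ u v : List σ, ∀ w : ℕ → σ,
    (wcat (u ++ wpow v n) w ∈ L ↔ wcat (u ++ wpow v (n + 1)) w ∈ L)

/-- `L` is respective of its right congruence. -/
def Respective [Inhabited σ] (L : Set (ℕ → σ)) : Prop :=
  ∃ n₀ : ℕ, ∀ n > n₀, ∀ x u : List σ, u ≠ [] →
    wcat x (wrep u) ∈ L → RC L (x ++ wpow u n) (x ++ wpow u (n + 1))

lemma wcat_ge (x : List σ) (w : ℕ → σ) (n : ℕ) (h : x.length ≤ n) :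
    wcat x w n = w (n - x.length) := dif_neg (by omega)

lemma eventually_wcat (b : Bool) (x : List Bool) (w : ℕ → Bool) :
    (∃ n, ∀ i ≥ n, wcat x w i = b) ↔ (∃ n, ∀ i ≥ n, w i = b) := by
  constructor
  · rintro ⟨n, h⟩
    refine ⟨n, fun i hi => ?_⟩
    have := h (i + x.length) (by omega)
    rwa [wcat_ge _ _ _ (by omega), Nat.add_sub_cancel] at this
  · rintro ⟨n, h⟩
    refine ⟨n + x.length, fun i hi => ?_⟩
    rw [wcat_ge _ _ _ (by omega)]
    exact h _ (by omega)

/-- Alternating block boundaries. -/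
def altf (k m : ℕ) : ℕ → ℕ
  | 0 => 0
  | n + 1 => altf k m n + (if n % 2 = 0 then k else m)

lemma altf_spec (k m t : ℕ) :
    altf k m (2 * t) = t * (k + m) ∧ altf k m (2 * t + 1) = t * (k + m) + k := by
  induction t with
  | zero => simp [altf]
  | succ t ih =>
    have h1 : 2 * (t + 1) = (2 * t + 1) + 1 := by ring
    have he : altf k m (2 * (t + 1)) = (t + 1) * (k + m) := by
      rw [h1, altf, ih.2]
      have : (2 * t + 1) % 2 = 1 := by omega
      simp [this]; ring
    refine ⟨he, ?_⟩
    rw [altf, he]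
    have : (2 * (t + 1)) % 2 = 0 := by omega
    simp [this]


/-- `(a+b)*(a^ω ∪ b^ω)` has a trivial right congruence but is not `Σ*R^ω`. -/
theorem eventually_constant_trivial_rc_not_single_omegaPow :
    let L : Set (ℕ → Bool) :=
      { w | (∃ n, ∀ i ≥ n, w i = true) ∨ (∃ n, ∀ i ≥ n, w i = false) }
    (∀ x y : List Bool, RC L x y) ∧
    ¬ ∃ R : Set (List Bool),
        L = { v | ∃ (x : List Bool) (w : ℕ → Bool), w ∈ omegaPow R ∧ v = wcat x w } := by
  intro L
  have memL : ∀ v : ℕ → Bool, v ∈ L ↔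
      ((∃ n, ∀ i ≥ n, v i = true) ∨ (∃ n, ∀ i ≥ n, v i = false)) := fun v => Iff.rfl
  constructor
  · intro x y w
    rw [memL, memL, eventually_wcat, eventually_wcat, eventually_wcat, eventually_wcat]
  · rintro ⟨R, hR⟩
    -- the all-true word is in L, extract a true block
    have hT : (fun _ => true : ℕ → Bool) ∈ L := Or.inl ⟨0, fun _ _ => rfl⟩
    rw [hR] at hT
    obtain ⟨x, w, ⟨f, hf0, hfm, hfR⟩, hTw⟩ := hT
    have hwtrue : ∀ n, w n = true := by
      intro n
      have := congrFun hTw (n + x.length)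
      rw [wcat_ge _ _ _ (by omega), Nat.add_sub_cancel] at this
      exact this.symm
    set k := f 1 with hkdef
    have hk : 0 < k := by have := hfm (show (0:ℕ) < 1 by omega); omega
    have hkR : List.replicate k true ∈ R := by
      have := hfR 0
      rw [hf0] at this
      have hseg : segment w 0 k = List.replicate k true := by
        unfold segment
        rw [Nat.sub_zero, List.eq_replicate_iff]
        refine ⟨by simp, ?_⟩
        intro b hb
        simp only [List.mem_map] at hb
        obtain ⟨j, _, hj⟩ := hb
        rw [← hj, hwtrue]
      rwa [hseg] at this
    -- the all-false word is in L, extract a false block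
    have hF : (fun _ => false : ℕ → Bool) ∈ L := Or.inr ⟨0, fun _ _ => rfl⟩
    rw [hR] at hF
    obtain ⟨x', w', ⟨f', hf0', hfm', hfR'⟩, hFw⟩ := hF
    have hwfalse : ∀ n, w' n = false := by
      intro n
      have := congrFun hFw (n + x'.length)
      rw [wcat_ge _ _ _ (by omega), Nat.add_sub_cancel] at this
      exact this.symm
    set m := f' 1 with hmdef
    have hm : 0 < m := by have := hfm' (show (0:ℕ) < 1 by omega); omega
    have hmR : List.replicate m false ∈ R := by
      have := hfR' 0
      rw [hf0'] at this
      have hseg : segment w' 0 m = List.replicate m false := by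
        unfold segment
        rw [Nat.sub_zero, List.eq_replicate_iff]
        refine ⟨by simp, ?_⟩
        intro b hb
        simp only [List.mem_map] at hb
        obtain ⟨j, _, hj⟩ := hb
        rw [← hj, hwfalse]
      rwa [hseg] at this
    -- build the alternating word
    set p := k + m with hpdef
    set u : ℕ → Bool := fun n => decide (n % p < k) with hudef
    have hu : ∀ n, u n = decide (n % p < k) := fun _ => rfl
    have huseg_true : ∀ t : ℕ, segment u (t * p) (t * p + k) = List.replicate k true := by
      intro t
      unfold segment
      rw [Nat.add_sub_cancel_left, List.eq_replicate_iff]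
      refine ⟨by simp, ?_⟩
      intro b hb
      simp only [List.mem_map, List.mem_range] at hb
      obtain ⟨j, hjlt, hj⟩ := hb
      rw [← hj, hu]
      have : (t * p + j) % p = j := by
        rw [Nat.add_comm, Nat.mul_comm, Nat.add_mul_mod_self_left, Nat.mod_eq_of_lt (by omega)]
      rw [this]
      simp [hjlt]
    have huseg_false : ∀ t : ℕ, segment u (t * p + k) (t * p + k + m) = List.replicate m false := by
      intro t
      unfold segment
      rw [Nat.add_sub_cancel_left, List.eq_replicate_iff]
      refine ⟨by simp, ?_⟩
      intro b hb
      simp only [List.mem_map, List.mem_range] at hb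
      obtain ⟨j, hjlt, hj⟩ := hb
      rw [← hj, hu]
      have : (t * p + k + j) % p = k + j := by
        rw [Nat.add_assoc, Nat.add_comm, Nat.mul_comm, Nat.add_mul_mod_self_left,
          Nat.mod_eq_of_lt (by omega)]
      rw [this]
      simp
    have huR : u ∈ omegaPow R := by
      refine ⟨altf k m, rfl, ?_, ?_⟩
      · apply strictMono_nat_of_lt_succ
        intro n
        show altf k m n < altf k m n + _
        split <;> omega
      · intro i
        rcases Nat.even_or_odd i with ⟨t, ht⟩ | ⟨t, ht⟩
        · have h1 : altf k m i = t * p := by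
            rw [ht, show t + t = 2 * t by ring]; exact (altf_spec k m t).1
          have h2 : altf k m (i + 1) = t * p + k := by
            rw [ht, show t + t + 1 = 2 * t + 1 by ring]; exact (altf_spec k m t).2
          rw [h1, h2, huseg_true]; exact hkR
        · have h1 : altf k m i = t * p + k := by
            rw [ht, show 2 * t + 1 = 2 * t + 1 by ring]; exact (altf_spec k m t).2
          have h2 : altf k m (i + 1) = t * p + k + m := by
            rw [ht, show 2 * t + 1 + 1 = 2 * (t + 1) by ring]
            have := (altf_spec k m (t + 1)).1
            rw [this]; ring
          rw [h1, h2, huseg_false]; exact hmR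
    have huL : u ∈ L := by
      rw [hR]
      refine ⟨[], u, huR, funext fun n => ?_⟩
      simp [wcat]
    rcases (memL u).mp huL with ⟨n, hn⟩ | ⟨n, hn⟩
    · have := hn (n * p + k) (by have := Nat.le_mul_of_pos_right n (show 0 < p by omega); omega)
      rw [hu] at this
      have hmod : (n * p + k) % p = k := by
        rw [Nat.add_comm, Nat.mul_comm, Nat.add_mul_mod_self_left, Nat.mod_eq_of_lt (by omega)]
      rw [hmod] at this
      simp at this
    · have := hn (n * p) (by have := Nat.le_mul_of_pos_right n (show 0 < p by omega); omega)
      rw [hu] at this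
      have hmod : (n * p) % p = 0 := by simp
      rw [hmod] at this
      simp at this
      omega


end OmegaRC
end

section
/- If a regular ω-language L has a trivial right congruence (|∼_L| = 1), then L can be written as Σ*(R_1^ω ∪ ... ∪ R_k^ω) for some finite family of regular languages R_1, ..., R_k of finite words. Specifically, taking a deterministic Muller automaton M for L with accepting sets S_1, ..., S_k (each strongly connected) with all states reachable, and letting R_i be the set of finite words that loop from a fixed state s_i ∈ S_i back to s_i while visiting exactly the states of S_i, one has L = Σ*(R_1^ω ∪ ... ∪ R_k^ω). -/
namespace OmegaRC

variable {σ : Type*} {Q : Type*}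

lemma seg_shift (v : ℕ → σ) (c a b : ℕ) :
    segment (fun k => v (k + c)) a b = segment v (c + a) (c + b) := by
  unfold segment
  rw [show c + b - (c + a) = b - a by omega]
  apply List.map_congr_left
  intro k _
  show v (a + k + c) = v (c + a + k)
  congr 1; omega

lemma seg_wcat_right (x : List σ) (w : ℕ → σ) (a b : ℕ) :
    segment (wcat x w) (x.length + a) (x.length + b) = segment w a b := by
  unfold segment
  rw [show x.length + b - (x.length + a) = b - a by omega]
  apply List.map_congr_left
  intro k _
  simp only [wcat]
  rw [dif_neg (by omega)]
  congr 1; omega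

lemma seg_wcat_left (x : List σ) (w : ℕ → σ) :
    segment (wcat x w) 0 x.length = x := by
  apply List.ext_getElem
  · simp [segment]
  · intro n h1 h2
    simp only [segment, Nat.sub_zero, List.getElem_map, List.getElem_range, Nat.zero_add, wcat]
    simp [segment] at h1
    rw [dif_pos h1]
    simp

lemma wcat_segment (v : ℕ → σ) (n : ℕ) :
    wcat (segment v 0 n) (fun k => v (k + n)) = v := by
  funext m
  have hlen : (segment v 0 n).length = n := by simp [segment]
  by_cases h : m < n
  · simp only [wcat, hlen]
    rw [dif_pos h]
    simp [segment]
  · simp only [wcat, hlen]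
    rw [dif_neg h]
    congr 1; omega

lemma segment_succ (v : ℕ → σ) (m t : ℕ) :
    segment v m (m + (t + 1)) = v m :: segment v (m + 1) (m + 1 + t) := by
  unfold segment
  rw [show m + (t + 1) - m = t + 1 by omega, show m + 1 + t - (m + 1) = t by omega,
    List.range_succ_eq_map, List.map_cons, List.map_map]
  congr 1
  · congr 1
    funext k; simp only [Function.comp_apply]; congr 1; omega

lemma runFin_run (A : DetAut σ Q) (v : ℕ → σ) (t : ℕ) :
    ∀ m, A.runFin (A.run v m) (segment v m (m + t)) = A.run v (m + t) := by
  induction t with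
  | zero => intro m; simp [segment, DetAut.runFin]
  | succ t ih =>
    intro m
    rw [segment_succ]
    show A.runFin (A.step (A.run v m) (v m)) _ = _
    have : A.step (A.run v m) (v m) = A.run v (m + 1) := rfl
    rw [this, ih (m + 1), show m + 1 + t = m + (t + 1) by omega]

lemma scanl_run (A : DetAut σ Q) (v : ℕ → σ) (t : ℕ) :
    ∀ m, List.scanl A.step (A.run v m) (segment v m (m + t)) =
      (List.range (t + 1)).map (fun u => A.run v (m + u)) := by
  induction t with
  | zero => intro m; simp [segment, List.range_succ]
  | succ t ih =>
    intro m
    rw [segment_succ, List.scanl_cons]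
    have h1 : A.step (A.run v m) (v m) = A.run v (m + 1) := rfl
    rw [h1, ih (m + 1)]
    conv_rhs => rw [List.range_succ_eq_map, List.map_cons, List.map_map]
    congr 1
    congr 1
    funext k; simp only [Function.comp_apply]; congr 1; omega

lemma interval_mem (f : ℕ → ℕ) (hf0 : f 0 = 0) (hfm : StrictMono f) (t : ℕ) :
    ∃ j, f j ≤ t ∧ t < f (j + 1) := by
  induction t with
  | zero => exact ⟨0, by omega, by rw [← hf0]; exact hfm (by omega)⟩
  | succ t ih =>
    obtain ⟨j, h1, h2⟩ := ih
    by_cases h : t + 1 < f (j + 1)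
    · exact ⟨j, by omega, h⟩
    · exact ⟨j + 1, by omega, by have := hfm (show j + 1 < j + 1 + 1 by omega); omega⟩


/-- a regular ω-language with trivial right congruence equals
`Σ*(R₁^ω ∪ … ∪ R_k^ω)` for the loop languages of its DMA's accepting SCCs. -/
theorem trivial_rc_characterization {σ Q : Type*} [Fintype Q] (A : DetAut σ Q) (k : ℕ)
    (S : Fin k → Set Q) (s : Fin k → Q)
    (hs : ∀ i, s i ∈ S i)
    (hSCC : ∀ i, IsSCC A (S i))
    (hreach : ∀ q : Q, ∃ x : List σ, A.runFin A.init x = q)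
    (L : Set (ℕ → σ))
    (hL : ∀ w, w ∈ L ↔ MullerAcc A (Set.range S) w)
    (htriv : ∀ x y : List σ, RC L x y)
    (R : Fin k → Set (List σ))
    (hR : ∀ i, R i = { x | x ≠ [] ∧ A.runFin (s i) x = s i ∧
                           { q | q ∈ List.scanl A.step (s i) x } = S i }) :
    L = { v | ∃ (x : List σ) (w : ℕ → σ), (∃ i, w ∈ omegaPow (R i)) ∧ v = wcat x w } := by
  ext v
  constructor
  · -- L ⊆ decomposition
    intro hv
    obtain ⟨i, hI⟩ := (hL v).1 hv
    -- hI : S i = infSet (A.run v)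
    have hinf : ∀ q ∈ S i, ∀ nn : ℕ, ∃ m, nn ≤ m ∧ A.run v m = q := by
      intro q hq
      rw [hI] at hq
      exact hq
    have hbound : ∀ q : Q, ∃ nq : ℕ, ∀ m, nq ≤ m → A.run v m = q → q ∈ S i := by
      intro q
      by_cases hq : q ∈ S i
      · exact ⟨0, fun _ _ _ => hq⟩
      · have hq' : q ∉ infSet (A.run v) := by rw [← hI]; exact hq
        simp only [infSet, Set.mem_setOf_eq, not_forall, not_exists, not_and] at hq'
        obtain ⟨nq, hnq⟩ := hq'
        exact ⟨nq, fun m hm hrm => absurd hrm (hnq m hm)⟩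
    choose g hg using hbound
    have hN : ∀ m, Finset.univ.sup g ≤ m → A.run v m ∈ S i := fun m hm =>
      hg (A.run v m) m (le_trans (Finset.le_sup (Finset.mem_univ (A.run v m))) hm) rfl
    have hstep : ∀ a : ℕ, ∃ b, a < b ∧ A.run v b = s i ∧
        ∀ q ∈ S i, ∃ m, a ≤ m ∧ m ≤ b ∧ A.run v m = q := by
      intro a
      have h1 : ∀ q : Q, ∃ m, a ≤ m ∧ (q ∈ S i → A.run v m = q) := by
        intro q
        by_cases hq : q ∈ S i
        · obtain ⟨m, hm1, hm2⟩ := hinf q hq a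
          exact ⟨m, hm1, fun _ => hm2⟩
        · exact ⟨a, le_refl a, fun h => absurd h hq⟩
      choose mo hmo using h1
      obtain ⟨b, hb1, hb2⟩ := hinf (s i) (hs i) (Finset.univ.sup mo + 1)
      refine ⟨b, ?_, hb2, ?_⟩
      · have h2 : mo (s i) ≤ Finset.univ.sup mo := Finset.le_sup (Finset.mem_univ _)
        have h3 := (hmo (s i)).1
        omega
      · intro q hq
        refine ⟨mo q, (hmo q).1, ?_, (hmo q).2 hq⟩
        have h2 : mo q ≤ Finset.univ.sup mo := Finset.le_sup (Finset.mem_univ _)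
        omega
    obtain ⟨n0, hn0N, hn0s⟩ := hinf (s i) (hs i) (Finset.univ.sup g)
    choose nxt hnxt using hstep
    set n : ℕ → ℕ := fun j => nxt^[j] n0 with hn
    have hnsucc : ∀ j, n (j + 1) = nxt (n j) := fun j => Function.iterate_succ_apply' nxt j n0
    have hlt : ∀ j, n j < n (j + 1) := fun j => by rw [hnsucc]; exact (hnxt (n j)).1
    have hrs : ∀ j, A.run v (n j) = s i := by
      intro j
      cases j with
      | zero => exact hn0s
      | succ j => rw [hnsucc]; exact (hnxt (n j)).2.1
    have hmonoN : Monotone n := monotone_nat_of_le_succ (fun j => (hlt j).le)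
    have hgeN : ∀ j, Finset.univ.sup g ≤ n j := fun j =>
      le_trans hn0N (hmonoN (Nat.zero_le j))
    refine ⟨segment v 0 (n 0), fun k => v (k + n 0), ⟨i, ?_⟩, (wcat_segment v (n 0)).symm⟩
    refine ⟨fun j => n j - n 0, by simp, ?_, ?_⟩
    · apply strictMono_nat_of_lt_succ
      intro j
      have h1 := hlt j
      have h2 := hmonoN (Nat.zero_le j)
      omega
    · intro j
      have h0j : n 0 ≤ n j := hmonoN (Nat.zero_le j)
      have h0j' : n 0 ≤ n (j + 1) := hmonoN (Nat.zero_le (j + 1))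
      have hltj := hlt j
      have hseg : segment (fun k => v (k + n 0)) (n j - n 0) (n (j + 1) - n 0)
          = segment v (n j) (n (j + 1)) := by
        rw [seg_shift]
        congr 1 <;> omega
      rw [hseg, hR]
      have hnt : n j + (n (j + 1) - n j) = n (j + 1) := by omega
      have hscan := scanl_run A v (n (j + 1) - n j) (n j)
      rw [hrs j, hnt] at hscan
      have hfold := runFin_run A v (n (j + 1) - n j) (n j)
      rw [hrs j, hnt] at hfold
      refine ⟨?_, ?_, ?_⟩
      · apply List.ne_nil_of_length_pos
        simp only [segment, List.length_map, List.length_range]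
        omega
      · rw [hfold, hrs (j + 1)]
      · rw [hscan]
        ext q
        simp only [Set.mem_setOf_eq, List.mem_map, List.mem_range]
        constructor
        · rintro ⟨u, hu, rfl⟩
          exact hN _ (by have := hgeN j; omega)
        · intro hq
          obtain ⟨m, hm1, hm2, hm3⟩ := (hnxt (n j)).2.2 q hq
          rw [← hnsucc j] at hm2
          exact ⟨m - n j, by omega, by rw [show n j + (m - n j) = m by omega]; exact hm3⟩
  · -- decomposition ⊆ L
    rintro ⟨x, w, ⟨i, hw⟩, rfl⟩
    obtain ⟨f, hf0, hfm, hfR⟩ := hw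
    obtain ⟨x₀, hx₀⟩ := hreach (s i)
    have hfge : ∀ j, j ≤ f j := by
      intro j
      induction j with
      | zero => omega
      | succ j ih => have := hfm (show j < j + 1 by omega); omega
    have key1 : ∀ j, A.run (wcat x₀ w) (x₀.length + f j) = s i := by
      intro j
      induction j with
      | zero =>
        rw [hf0, Nat.add_zero]
        have h := runFin_run A (wcat x₀ w) x₀.length 0
        rw [Nat.zero_add] at h
        have h0 : A.run (wcat x₀ w) 0 = A.init := rfl
        rw [h0, seg_wcat_left] at h
        rw [← h, hx₀]
      | succ j ih =>
        have hle : f j ≤ f (j + 1) := (hfm (Nat.lt_succ_self j)).le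
        have hnt : f j + (f (j + 1) - f j) = f (j + 1) := by omega
        have h := runFin_run A (wcat x₀ w) (f (j + 1) - f j) (x₀.length + f j)
        rw [ih] at h
        have hsegeq : segment (wcat x₀ w) (x₀.length + f j) (x₀.length + f j + (f (j + 1) - f j))
            = segment w (f j) (f (j + 1)) := by
          rw [show x₀.length + f j + (f (j + 1) - f j) = x₀.length + (f j + (f (j + 1) - f j))
            by omega, seg_wcat_right, hnt]
        rw [hsegeq] at h
        have hmemR := hfR j
        rw [hR] at hmemR
        simp only [Set.mem_setOf_eq] at hmemR
        rw [hmemR.2.1] at h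
        rw [show x₀.length + f j + (f (j + 1) - f j) = x₀.length + f (j + 1) by omega] at h
        exact h.symm
    have key2 : ∀ j, ∀ q : Q, q ∈ S i ↔
        ∃ u, u < (f (j + 1) - f j) + 1 ∧ A.run (wcat x₀ w) (x₀.length + f j + u) = q := by
      intro j q
      have hle : f j ≤ f (j + 1) := (hfm (Nat.lt_succ_self j)).le
      have hnt : f j + (f (j + 1) - f j) = f (j + 1) := by omega
      have hscan := scanl_run A (wcat x₀ w) (f (j + 1) - f j) (x₀.length + f j)
      rw [key1 j] at hscan
      have hsegeq : segment (wcat x₀ w) (x₀.length + f j) (x₀.length + f j + (f (j + 1) - f j))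
          = segment w (f j) (f (j + 1)) := by
        rw [show x₀.length + f j + (f (j + 1) - f j) = x₀.length + (f j + (f (j + 1) - f j))
          by omega, seg_wcat_right, hnt]
      rw [hsegeq] at hscan
      have hmemR := hfR j
      rw [hR] at hmemR
      simp only [Set.mem_setOf_eq] at hmemR
      have hset := hmemR.2.2
      constructor
      · intro hq
        rw [← hset] at hq
        have hq' : q ∈ List.scanl A.step (s i) (segment w (f j) (f (j + 1))) := hq
        rw [hscan] at hq'
        simp only [List.mem_map, List.mem_range] at hq'
        obtain ⟨u, hu, hu2⟩ := hq'
        exact ⟨u, hu, hu2⟩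
      · rintro ⟨u, hu, rfl⟩
        rw [← hset]
        show _ ∈ List.scanl _ _ _
        rw [hscan]
        simp only [List.mem_map, List.mem_range]
        exact ⟨u, hu, rfl⟩
    have hInf : infSet (A.run (wcat x₀ w)) = S i := by
      ext q
      constructor
      · intro hq
        obtain ⟨m, hm1, hm2⟩ := hq x₀.length
        obtain ⟨j, hj1, hj2⟩ := interval_mem f hf0 hfm (m - x₀.length)
        rw [key2 j q]
        exact ⟨m - x₀.length - f j, by omega,
          by rw [show x₀.length + f j + (m - x₀.length - f j) = m by omega]; exact hm2⟩
      · intro hq nn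
        obtain ⟨u, hu, hu2⟩ := (key2 nn q).1 hq
        refine ⟨x₀.length + f nn + u, ?_, hu2⟩
        have := hfge nn
        omega
    have hx₀L : wcat x₀ w ∈ L := by
      rw [hL]
      show infSet (A.run (wcat x₀ w)) ∈ Set.range S
      rw [hInf]
      exact ⟨i, rfl⟩
    exact (htriv x x₀ w).2 hx₀L

end OmegaRC
end

section
/- Two regular ω-languages are equal iff they contain the same ultimately periodic words: if L₁ and L₂ are recognized by deterministic Muller automata and for all finite words u and nonempty finite words v, u v^ω ∈ L₁ ↔ u v^ω ∈ L₂, then L₁ = L₂. -/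
namespace OmegaRC

variable {σ : Type*} {Q : Type*}

section UPAux

lemma infinite_of_unbounded {P : ℕ → Prop} (h : ∀ n, ∃ m, n ≤ m ∧ P m) :
    {m | P m}.Infinite := by
  intro hfin
  obtain ⟨b, hb⟩ := hfin.bddAbove
  obtain ⟨m, hm, hPm⟩ := h (b + 1)
  exact absurd (hb hPm) (by omega)

lemma infSet_fst {Q1 Q2 : Type*} [Finite Q2] (r : ℕ → Q1 × Q2) :
    infSet (fun n => (r n).1) = Prod.fst '' infSet r := by
  ext q1
  constructor
  · intro hq
    by_contra hno
    have hfib : ∀ q2 : Q2, {m | r m = (q1, q2)}.Finite := by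
      intro q2
      by_contra hinf
      apply hno
      refine ⟨(q1, q2), fun n => ?_, rfl⟩
      have hinf2 : {m | r m = (q1, q2)}.Infinite := hinf
      obtain ⟨m, hm, hlt⟩ := hinf2.exists_gt n
      exact ⟨m, hlt.le, hm⟩
    have hsub : {m | (r m).1 = q1} ⊆ ⋃ q2 : Q2, {m | r m = (q1, q2)} := by
      intro m hm
      exact Set.mem_iUnion.mpr ⟨(r m).2, by ext <;> simp_all⟩
    exact infinite_of_unbounded hq (Set.Finite.subset (Set.finite_iUnion hfib) hsub)
  · rintro ⟨⟨a, b⟩, hmem, rfl⟩ n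
    obtain ⟨m, hm, he⟩ := hmem n
    exact ⟨m, hm, by show (r m).1 = a; rw [he]⟩

lemma infSet_snd {Q1 Q2 : Type*} [Finite Q1] (r : ℕ → Q1 × Q2) :
    infSet (fun n => (r n).2) = Prod.snd '' infSet r := by
  ext q2
  constructor
  · intro hq
    by_contra hno
    have hfib : ∀ q1 : Q1, {m | r m = (q1, q2)}.Finite := by
      intro q1
      by_contra hinf
      apply hno
      refine ⟨(q1, q2), fun n => ?_, rfl⟩
      have hinf2 : {m | r m = (q1, q2)}.Infinite := hinf
      obtain ⟨m, hm, hlt⟩ := hinf2.exists_gt n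
      exact ⟨m, hlt.le, hm⟩
    have hsub : {m | (r m).2 = q2} ⊆ ⋃ q1 : Q1, {m | r m = (q1, q2)} := by
      intro m hm
      exact Set.mem_iUnion.mpr ⟨(r m).1, by ext <;> simp_all⟩
    exact infinite_of_unbounded hq (Set.Finite.subset (Set.finite_iUnion hfib) hsub)
  · rintro ⟨⟨a, b⟩, hmem, rfl⟩ n
    obtain ⟨m, hm, he⟩ := hmem n
    exact ⟨m, hm, by show (r m).2 = b; rw [he]⟩

lemma exists_tail_infSet [Finite Q] (r : ℕ → Q) : ∃ N, ∀ m, N ≤ m → r m ∈ infSet r := by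
  have hfin : {m | r m ∉ infSet r}.Finite := by
    have hsub : {m | r m ∉ infSet r} ⊆ ⋃ q : Q, {m | r m = q ∧ q ∉ infSet r} := by
      intro m hm; exact Set.mem_iUnion.mpr ⟨r m, rfl, hm⟩
    refine Set.Finite.subset (Set.finite_iUnion fun q => ?_) hsub
    by_cases hq : q ∈ infSet r
    · convert Set.finite_empty using 1; ext m; simp [hq]
    · simp only [infSet, Set.mem_setOf_eq, not_forall] at hq
      obtain ⟨n, hn⟩ := hq
      push_neg at hn
      refine Set.Finite.subset (Set.finite_Iio n) fun m hm => Set.mem_Iio.mpr ?_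
      by_contra hge
      push_neg at hge
      exact hn m hge hm.1
  obtain ⟨b, hb⟩ := hfin.bddAbove
  refine ⟨b + 1, fun m hm => ?_⟩
  by_contra hc
  exact absurd (hb hc) (by omega)

/-- Product automaton. -/
def prodAut {Q1 Q2 : Type*} (A1 : DetAut σ Q1) (A2 : DetAut σ Q2) : DetAut σ (Q1 × Q2) :=
  ⟨(A1.init, A2.init), fun q a => (A1.step q.1 a, A2.step q.2 a)⟩

lemma prod_run {Q1 Q2 : Type*} (A1 : DetAut σ Q1) (A2 : DetAut σ Q2) (w : ℕ → σ) :
    ∀ n, (prodAut A1 A2).run w n = (A1.run w n, A2.run w n)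
  | 0 => rfl
  | n+1 => by simp only [DetAut.run, prod_run A1 A2 w n]; rfl

lemma run_succ (A : DetAut σ Q) (w : ℕ → σ) (n : ℕ) :
    A.run w (n + 1) = A.step (A.run w n) (w n) := rfl

lemma run_congr (A : DetAut σ Q) (w w' : ℕ → σ) :
    ∀ n, (∀ k, k < n → w k = w' k) → A.run w n = A.run w' n
  | 0, _ => rfl
  | n+1, h => by
    simp only [DetAut.run]
    rw [run_congr A w w' n (fun k hk => h k (by omega)), h n (by omega)]

lemma segment_length (w : ℕ → σ) (i j : ℕ) : (segment w i j).length = j - i := by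
  simp [segment]

lemma segment_get (w : ℕ → σ) (i j k : ℕ) (h : k < (segment w i j).length) :
    (segment w i j).get ⟨k, h⟩ = w (i + k) := by simp [segment]

lemma segment_getD [Inhabited σ] (w : ℕ → σ) (i j k : ℕ) (hk : k < j - i) :
    (segment w i j).getD k default = w (i + k) := by
  rw [List.getD_eq_getElem _ _ (by rw [segment_length]; omega)]
  simp [segment]

lemma wcat_val [Inhabited σ] (w : ℕ → σ) (N M : ℕ) (hNM : N < M) (n : ℕ) :
    wcat (segment w 0 N) (wrep (segment w N M)) n =
      if n < N then w n else w (N + (n - N) % (M - N)) := by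
  unfold wcat wrep
  have hl : (segment w 0 N).length = N := by rw [segment_length]; omega
  by_cases h : n < N
  · rw [if_pos h, dif_pos (by omega : n < (segment w 0 N).length), segment_get]
    simp
  · rw [if_neg h, dif_neg (by omega : ¬ n < (segment w 0 N).length), hl,
      segment_length, segment_getD w N M _ (Nat.mod_lt _ (by omega))]

end UPAux

/-- two DMA-recognizable ω-languages agreeing on all ultimately periodic
words are equal. -/
theorem up_words_determine_regular {σ Q1 Q2 : Type*} [Inhabited σ] [Fintype Q1] [Fintype Q2]
    (A1 : DetAut σ Q1) (A2 : DetAut σ Q2) (acc1 : Set (Set Q1)) (acc2 : Set (Set Q2))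
    (h : ∀ (u v : List σ), v ≠ [] →
      (MullerAcc A1 acc1 (wcat u (wrep v)) ↔ MullerAcc A2 acc2 (wcat u (wrep v)))) :
    ∀ w : ℕ → σ, MullerAcc A1 acc1 w ↔ MullerAcc A2 acc2 w := by
  intro w
  classical
  set A := prodAut A1 A2 with hA
  set r := A.run w with hr
  obtain ⟨N, hN⟩ := exists_tail_infSet r
  have hchoice : ∀ q : Q1 × Q2, ∃ m, N ≤ m ∧ (q ∈ infSet r → r m = q) := by
    intro q
    by_cases hq : q ∈ infSet r
    · obtain ⟨m, hm1, hm2⟩ := hq N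
      exact ⟨m, hm1, fun _ => hm2⟩
    · exact ⟨N, le_refl N, fun hmem => absurd hmem hq⟩
  choose t ht1 ht2 using hchoice
  set K := Finset.univ.sup t with hK
  have hrN : r N ∈ infSet r := hN N le_rfl
  obtain ⟨M, hM1, hM2⟩ := hrN (K + 1)
  have hKN : N ≤ K := le_trans (ht1 (r N)) (Finset.le_sup (Finset.mem_univ (r N)))
  have hNM : N < M := by omega
  set p := M - N with hp
  have hp0 : 0 < p := by omega
  set u := segment w 0 N with hu
  set v := segment w N M with hv'
  have hvlen : v.length = p := segment_length w N M
  have hv : v ≠ [] := by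
    intro hcon
    rw [hcon] at hvlen
    simp at hvlen
    omega
  set w' := wcat u (wrep v) with hw'
  have hval : ∀ n, w' n = if n < N then w n else w (N + (n - N) % p) :=
    wcat_val w N M hNM
  set r' := A.run w' with hr'
  have hagree : ∀ n, n ≤ M → r' n = r n := by
    intro n hn
    apply run_congr
    intro k hk
    rw [hval k]
    split
    · rfl
    · next hkN =>
      push_neg at hkN
      rw [Nat.mod_eq_of_lt (by omega : k - N < p)]
      congr 1
      omega
  have hperiod : ∀ k, r' (N + k + p) = r' (N + k) := by
    intro k
    induction k with
    | zero =>
      simp only [Nat.add_zero]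
      have h1 : r' (N + p) = r M := by
        rw [show N + p = M by omega]; exact hagree M le_rfl
      rw [h1, hagree N (by omega), hM2]
    | succ k ih =>
      rw [show N + (k+1) + p = (N + k + p) + 1 by omega,
        show N + (k+1) = (N + k) + 1 by omega, hr', run_succ, run_succ, ← hr', ih]
      congr 1
      rw [hval, hval, if_neg (by omega), if_neg (by omega)]
      congr 2
      rw [show N + k + p - N = k + p by omega, show N + k - N = k by omega,
        Nat.add_mod_right]
  have key : ∀ k, r' (N + k) = r (N + k % p) := by
    intro k
    induction k using Nat.strong_induction_on with
    | _ k ih =>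
      by_cases hk : k < p
      · rw [Nat.mod_eq_of_lt hk]
        exact hagree (N + k) (by omega)
      · push_neg at hk
        rw [show N + k = (N + (k - p)) + p by omega, hperiod (k - p),
          ih (k - p) (by omega)]
        congr 2
        rw [← Nat.add_mod_right (k - p) p, Nat.sub_add_cancel hk]
  have hinf_eq : infSet r' = infSet r := by
    ext q
    constructor
    · intro hq
      obtain ⟨m, hm, hqm⟩ := hq N
      have hkey := key (m - N)
      rw [show N + (m - N) = m by omega] at hkey
      rw [hkey] at hqm
      rw [← hqm]
      exact hN _ (by omega)
    · intro hq n
      have htq := ht2 q hq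
      have h1 : N ≤ t q := ht1 q
      have h2 : t q ≤ K := Finset.le_sup (Finset.mem_univ q)
      have hjp : t q - N < p := by omega
      have hnp : n + 1 ≤ (n + 1) * p := Nat.le_mul_of_pos_right _ hp0
      refine ⟨N + (t q - N) + (n + 1) * p, by omega, ?_⟩
      have hkey := key ((t q - N) + (n + 1) * p)
      rw [show N + (t q - N) + (n + 1) * p = N + ((t q - N) + (n + 1) * p) by omega,
        hkey, Nat.add_mul_mod_self_right, Nat.mod_eq_of_lt hjp,
        show N + (t q - N) = t q by omega]
      exact htq
  have c1 : infSet (A1.run w') = infSet (A1.run w) := by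
    have e1 : (fun n => (r' n).1) = A1.run w' := by
      funext n; rw [hr', hA, prod_run]
    have e2 : (fun n => (r n).1) = A1.run w := by
      funext n; rw [hr, hA, prod_run]
    rw [← e1, ← e2, infSet_fst, infSet_fst, hinf_eq]
  have c2 : infSet (A2.run w') = infSet (A2.run w) := by
    have e1 : (fun n => (r' n).2) = A2.run w' := by
      funext n; rw [hr', hA, prod_run]
    have e2 : (fun n => (r n).2) = A2.run w := by
      funext n; rw [hr, hA, prod_run]
    rw [← e1, ← e2, infSet_snd, infSet_snd, hinf_eq]
  have step1 : MullerAcc A1 acc1 w ↔ MullerAcc A1 acc1 w' := by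
    unfold MullerAcc; rw [c1]
  have step3 : MullerAcc A2 acc2 w' ↔ MullerAcc A2 acc2 w := by
    unfold MullerAcc; rw [c2]
  exact step1.trans ((h u v hv).trans step3)


end OmegaRC
end

section
/- For every ω-word w accepted by a deterministic Muller automaton M, there exists an ultimately periodic word u v^ω accepted by M such that the run of M on u v^ω has the same infinity set as the run on w; in particular every nonempty DMA-recognizable language contains an ultimately periodic word. -/
namespace OmegaRC

variable {σ : Type*} {Q : Type*}

/-- Run from an arbitrary state. -/
def runFrom (A : DetAut σ Q) (q : Q) (w : ℕ → σ) : ℕ → Q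
  | 0 => q
  | n + 1 => A.step (runFrom A q w n) (w n)

lemma runFrom_congr (A : DetAut σ Q) (q : Q) (w1 w2 : ℕ → σ) {n : ℕ}
    (h : ∀ k < n, w1 k = w2 k) : ∀ j ≤ n, runFrom A q w1 j = runFrom A q w2 j := by
  intro j hj
  induction j with
  | zero => rfl
  | succ j ih =>
    simp only [runFrom, ih (Nat.le_of_succ_le hj), h j (Nat.lt_of_succ_le hj)]

lemma run_eq_runFrom (A : DetAut σ Q) (w : ℕ → σ) (n : ℕ) :
    A.run w n = runFrom A A.init w n := by
  induction n with
  | zero => rfl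
  | succ n ih => simp only [DetAut.run, runFrom, ih]

lemma runFrom_shift (A : DetAut σ Q) (q : Q) (w : ℕ → σ) (c m : ℕ) :
    runFrom A q w (c + m) = runFrom A (runFrom A q w c) (fun i => w (c + i)) m := by
  induction m with
  | zero => rfl
  | succ m ih =>
    have h1 : runFrom A q w (c + (m + 1)) = A.step (runFrom A q w (c + m)) (w (c + m)) := rfl
    rw [h1, ih]
    rfl

lemma wcat_shift_apply (x : List σ) (w : ℕ → σ) (n : ℕ) :
    wcat x w (x.length + n) = w n := by
  simp [wcat]

/-- every word accepted by a DMA yields an accepted ultimately periodic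
word with the same infinity set. -/
theorem accepted_word_gives_up_witness {σ Q : Type*} [Inhabited σ] [Fintype Q]
    (A : DetAut σ Q) (acc : Set (Set Q)) (w : ℕ → σ) (hw : MullerAcc A acc w) :
    ∃ (u v : List σ), v ≠ [] ∧ MullerAcc A acc (wcat u (wrep v)) ∧
      infSet (A.run (wcat u (wrep v))) = infSet (A.run w) := by
  classical
  set r := A.run w with hr
  set S := infSet r with hSdef
  -- S is nonempty
  obtain ⟨s, hs⟩ : ∃ s, s ∈ S := by
    obtain ⟨q, hq⟩ := Finite.exists_infinite_fiber r
    refine ⟨q, fun n => ?_⟩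
    obtain ⟨m, hm, hlt⟩ := (Set.infinite_coe_iff.mp hq).exists_gt n
    exact ⟨m, hlt.le, hm⟩
  -- bound after which only states of S occur
  have hNq : ∀ q : Q, ∃ N, q ∉ S → ∀ m, N ≤ m → r m ≠ q := by
    intro q
    by_cases h : q ∈ S
    · exact ⟨0, fun hq => absurd h hq⟩
    · have h' : ¬ (∀ n, ∃ m, n ≤ m ∧ r m = q) := h
      push_neg at h'
      obtain ⟨N, hN⟩ := h'
      exact ⟨N, fun _ m hm => hN m hm⟩
  choose g hg using hNq
  set N := Finset.univ.sup g with hNdef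
  have hinS : ∀ m, N ≤ m → r m ∈ S := by
    intro m hm
    by_contra hqn
    exact hg (r m) hqn m (le_trans (Finset.le_sup (Finset.mem_univ _)) hm) rfl
  -- starting point
  obtain ⟨n0, hn0N, hn0⟩ := hs N
  -- visit times for all states of S
  have hvis : ∀ q : Q, ∃ m, q ∈ S → n0 ≤ m ∧ r m = q := by
    intro q
    by_cases h : q ∈ S
    · obtain ⟨m, hm1, hm2⟩ := h n0
      exact ⟨m, fun _ => ⟨hm1, hm2⟩⟩
    · exact ⟨0, fun hq => absurd hq h⟩
  choose f hf using hvis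
  set M := Finset.univ.sup f with hMdef
  obtain ⟨p, hpM, hp⟩ := hs (M + 1)
  have hn0M : n0 ≤ M := le_trans (hf s hs).1 (Finset.le_sup (Finset.mem_univ _))
  have hn0p : n0 < p := lt_of_le_of_lt hn0M (lt_of_lt_of_le (Nat.lt_succ_self M) hpM)
  -- the witnesses
  set u := segment w 0 n0 with hudef
  set v := segment w n0 p with hvdef
  have hul : u.length = n0 := by simp [hudef, segment_length]
  set len := v.length with hlendef
  have hvl : len = p - n0 := by simp [hlendef, hvdef, segment_length]
  have hlenpos : 0 < len := by omega
  have hvne : v ≠ [] := by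
    intro h
    rw [h] at hlendef
    simp at hlendef
    omega
  -- letter values
  have hwrep : ∀ j, j < len → wrep v j = w (n0 + j) := by
    intro j hj
    have hj' : j % len = j := Nat.mod_eq_of_lt hj
    have hjl : j < (segment w n0 p).length := by rwa [segment_length, ← hvl]
    simp only [wrep, ← hlendef, hj', hvdef]
    rw [Nat.mod_eq_of_lt hjl]
    rw [List.getD_eq_getElem _ _ hjl]
    simp [segment]
  set W := wcat u (wrep v) with hWdef
  have hWpre : ∀ k, k < n0 → W k = w k := by
    intro k hk
    have hk' : k < u.length := by omega
    simp only [hWdef, wcat, dif_pos hk']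
    simp [hudef, segment, List.get_eq_getElem]
  have hWshift : ∀ i, W (n0 + i) = wrep v i := by
    intro i
    rw [← hul]
    exact wcat_shift_apply u (wrep v) i
  -- run on W agrees with run on w up to n0
  set ρ := A.run W with hρdef
  have hpre : ∀ j, j ≤ n0 → ρ j = r j := by
    intro j hj
    rw [hρdef, hr, run_eq_runFrom, run_eq_runFrom]
    exact runFrom_congr A A.init W w hWpre j hj
  set τ := runFrom A s (wrep v) with hτdef
  have hρτ : ∀ m, ρ (n0 + m) = τ m := by
    intro m
    have h1 : ρ (n0 + m) = runFrom A (runFrom A A.init W n0) (fun i => W (n0 + i)) m := by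
      rw [hρdef, run_eq_runFrom, runFrom_shift]
    have h2 : runFrom A A.init W n0 = s := by
      rw [← run_eq_runFrom, ← hρdef, hpre n0 le_rfl, hn0]
    have h3 : (fun i => W (n0 + i)) = wrep v := funext hWshift
    rw [h1, h2, h3]
  -- τ matches r on [0, len]
  have hτr : ∀ j, j ≤ len → τ j = r (n0 + j) := by
    intro j hj
    induction j with
    | zero => simpa [hτdef, runFrom] using hn0.symm
    | succ j ih =>
      have hj' : j < len := by omega
      have : r (n0 + (j + 1)) = A.step (r (n0 + j)) (w (n0 + j)) := by
        rw [hr]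
        show A.run w (n0 + j + 1) = _
        rfl
      rw [this]
      simp only [hτdef, runFrom]
      rw [← hτdef, ih (by omega), hwrep j hj']
  have hτlen : τ len = s := by
    rw [hτr len le_rfl]
    have : n0 + len = p := by omega
    rw [this, hp]
  -- periodicity
  have hτper : ∀ m, τ (len + m) = τ m := by
    intro m
    have h1 : τ (len + m) = runFrom A (τ len) (fun i => wrep v (len + i)) m := by
      rw [hτdef, runFrom_shift]
    have h2 : (fun i => wrep v (len + i)) = wrep v := by
      funext i
      simp [wrep, ← hlendef, Nat.add_mod_left]
    rw [h1, h2, hτlen, ← hτdef]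
  have hτmul : ∀ k j, τ (len * k + j) = τ j := by
    intro k
    induction k with
    | zero => simp
    | succ k ih =>
      intro j
      have : len * (k + 1) + j = len + (len * k + j) := by ring
      rw [this, hτper, ih]
  have hτmod : ∀ m, τ m = τ (m % len) := by
    intro m
    conv_lhs => rw [← Nat.div_add_mod m len]
    exact hτmul _ _
  -- the infinity set of ρ is S
  have hinf : infSet ρ = S := by
    apply Set.eq_of_subset_of_subset
    · intro q hq
      obtain ⟨m, hm1, hm2⟩ := hq n0
      have : q = τ ((m - n0) % len) := by
        rw [← hτmod, ← hρτ, Nat.add_sub_cancel' hm1, hm2]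
      rw [this, hτr _ (le_of_lt (Nat.mod_lt _ hlenpos))]
      exact hinS _ (by omega)
    · intro q hq
      intro n
      obtain ⟨hm1, hm2⟩ := hf q hq
      have hfM : f q ≤ M := Finset.le_sup (Finset.mem_univ _)
      set j := f q - n0 with hjdef
      have hjlen : j < len := by omega
      refine ⟨n0 + (len * n + j), ?_, ?_⟩
      · have : n ≤ len * n := Nat.le_mul_of_pos_left n hlenpos
        omega
      · rw [hρτ, hτmul, hτr j (le_of_lt hjlen)]
        have : n0 + j = f q := by omega
        rw [this, hm2]
  refine ⟨u, v, hvne, ?_, ?_⟩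
  · show infSet (A.run W) ∈ acc
    rw [← hρdef, hinf]
    exact hw
  · rw [← hρdef, hinf]

end OmegaRC
end
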